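/- arXiv:1402.1886 — 2 statements merged into one kernel-verified Lean document; each statement's English description precedes it below -/
import Mathlib

section
/- Let X be a metric space, let g : X -> X be an isometry, and suppose there exist a constant L > 0 and a function W : X -> Z such that |W(x) - W(y)| <= L * d(x, y) for all x, y in X, and W(g^m(x)) = W(x) - m for all x in X and all integers m. Then for any basepoint x_0, the orbit map m -> g^m(x_0) from Z to X is a quasi-isometric embedding; in particular d(x_0, g^m(x_0)) >= |m| / L for all m. -/
lemma aux_iso {X : Type*} [MetricSpace X] (g : Equiv.Perm X) (hg : Isometry g) :
    ∀ (m : ℤ) (x y : X), dist ((g ^ m) x) ((g ^ m) y) = dist x y := by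
  have hinv : ∀ x y : X, dist (g⁻¹ x) (g⁻¹ y) = dist x y := by
    intro x y
    have := hg.dist_eq (g⁻¹ x) (g⁻¹ y)
    simpa using this.symm
  intro m
  induction m using Int.induction_on with
  | zero => simp
  | succ n ih =>
    intro x y
    have : (g ^ ((n : ℤ) + 1)) = g ^ (n : ℤ) * g := by
      rw [zpow_add, zpow_one]
    rw [this]
    simp only [Equiv.Perm.mul_apply]
    rw [ih, hg.dist_eq]
  | pred n ih =>
    intro x y
    have : (g ^ (-(n : ℤ) - 1)) = g ^ (-(n : ℤ)) * g⁻¹ := by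
      rw [sub_eq_add_neg, zpow_add, zpow_neg_one]
    rw [this]
    simp only [Equiv.Perm.mul_apply]
    rw [ih, hinv]

lemma aux_upper {X : Type*} [MetricSpace X] (g : Equiv.Perm X) (hg : Isometry g)
    (x₀ : X) : ∀ m : ℤ, dist x₀ ((g ^ m) x₀) ≤ (|m| : ℝ) * dist x₀ (g x₀) := by
  have hnat : ∀ n : ℕ, dist x₀ ((g ^ (n : ℤ)) x₀) ≤ (n : ℝ) * dist x₀ (g x₀) := by
    intro n
    induction n with
    | zero => simp
    | succ n ih =>
      have h1 : (g ^ ((n : ℤ) + 1)) x₀ = (g ^ (n : ℤ)) (g x₀) := by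
        rw [zpow_add, zpow_one]; rfl
      calc dist x₀ ((g ^ ((n : ℤ) + 1)) x₀)
          ≤ dist x₀ ((g ^ (n : ℤ)) x₀) + dist ((g ^ (n : ℤ)) x₀) ((g ^ ((n : ℤ) + 1)) x₀) :=
            dist_triangle _ _ _
        _ ≤ (n : ℝ) * dist x₀ (g x₀) + dist x₀ (g x₀) := by
            rw [h1, aux_iso g hg]
            exact add_le_add ih le_rfl
        _ = ((n : ℝ) + 1) * dist x₀ (g x₀) := by ring
      push_cast
      linarith
  intro m
  rcases le_or_gt 0 m with h | h
  · obtain ⟨n, rfl⟩ := Int.eq_ofNat_of_zero_le h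
    simpa [abs_of_nonneg h] using hnat n
  · obtain ⟨n, rfl⟩ : ∃ n : ℕ, m = -(n : ℤ) := ⟨m.natAbs, by omega⟩
    have key : dist x₀ ((g ^ (-(n : ℤ))) x₀) = dist x₀ ((g ^ (n : ℤ)) x₀) := by
      have := aux_iso g hg (n : ℤ) x₀ ((g ^ (-(n : ℤ))) x₀)
      rw [← this]
      have : (g ^ (n : ℤ)) ((g ^ (-(n : ℤ))) x₀) = x₀ := by
        rw [← Equiv.Perm.mul_apply, ← zpow_add]
        simp
      rw [this, dist_comm]
    rw [key]
    simpa [abs_of_nonpos h.le] using hnat n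

/-- If `g` is an isometry of a metric space `X`, and `W : X → ℤ` satisfies
`|W x - W y| ≤ L · d(x,y)` and `W (gᵐ x) = W x - m`, then every orbit map
`m ↦ gᵐ x₀` is a quasi-isometric embedding of `ℤ`; in particular
`d(x₀, gᵐ x₀) ≥ |m| / L`. -/
theorem stmt_2 {X : Type*} [MetricSpace X] (g : Equiv.Perm X) (hg : Isometry g)
    (L : ℝ) (hL : 0 < L) (W : X → ℤ)
    (hLip : ∀ x y : X, (|W x - W y| : ℝ) ≤ L * dist x y)
    (hW : ∀ (x : X) (m : ℤ), W ((g ^ m) x) = W x - m)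
    (x₀ : X) :
    (∃ A B : ℝ, 1 ≤ A ∧ 0 ≤ B ∧ ∀ m m' : ℤ,
      (1 / A) * (|m - m'| : ℤ) - B ≤ dist ((g ^ m) x₀) ((g ^ m') x₀) ∧
      dist ((g ^ m) x₀) ((g ^ m') x₀) ≤ A * (|m - m'| : ℤ) + B) ∧
    ∀ m : ℤ, (|m| : ℝ) / L ≤ dist x₀ ((g ^ m) x₀) := by
  -- lower bound key: |m - m'| ≤ L * dist (g^m x₀) (g^m' x₀)
  have hlow : ∀ m m' : ℤ, |(m : ℝ) - m'| ≤ L * dist ((g ^ m) x₀) ((g ^ m') x₀) := by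
    intro m m'
    have := hLip ((g ^ m) x₀) ((g ^ m') x₀)
    rw [hW, hW] at this
    push_cast at this
    calc |(m : ℝ) - m'| = |(W x₀ : ℝ) - m - ((W x₀ : ℝ) - m')| := by
          rw [abs_sub_comm]; ring_nf
      _ ≤ L * dist ((g ^ m) x₀) ((g ^ m') x₀) := this
  set c := dist x₀ (g x₀) with hc
  have hdist : ∀ m m' : ℤ, dist ((g ^ m) x₀) ((g ^ m') x₀) ≤ (|m - m'| : ℝ) * c := by
    intro m m'
    have h1 : (g ^ m) x₀ = (g ^ m') ((g ^ (m - m')) x₀) := by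
      rw [← Equiv.Perm.mul_apply, ← zpow_add]
      ring_nf
    rw [h1]
    calc dist ((g ^ m') ((g ^ (m - m')) x₀)) ((g ^ m') x₀)
        = dist ((g ^ (m - m')) x₀) x₀ := aux_iso g hg m' _ _
      _ = dist x₀ ((g ^ (m - m')) x₀) := dist_comm _ _
      _ ≤ (|m - m'| : ℝ) * c := by
          have := aux_upper g hg x₀ (m - m')
          push_cast at this ⊢
          exact this
  constructor
  · refine ⟨max (max L c) 1, 0, le_max_right _ _, le_rfl, fun m m' => ?_⟩
    set A := max (max L c) 1 with hA
    have hA1 : (1 : ℝ) ≤ A := le_max_right _ _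
    have hApos : 0 < A := lt_of_lt_of_le one_pos hA1
    have hLA : L ≤ A := le_trans (le_max_left _ _) (le_max_left _ _)
    have hcA : c ≤ A := le_trans (le_max_right _ _) (le_max_left _ _)
    constructor
    · rw [sub_zero]
      rw [div_mul_eq_mul_div, one_mul, div_le_iff₀ hApos]
      push_cast
      calc |(m : ℝ) - m'| ≤ L * dist ((g ^ m) x₀) ((g ^ m') x₀) := hlow m m'
        _ ≤ A * dist ((g ^ m) x₀) ((g ^ m') x₀) :=
            mul_le_mul_of_nonneg_right hLA dist_nonneg
        _ = dist ((g ^ m) x₀) ((g ^ m') x₀) * A := mul_comm _ _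
    · rw [add_zero]
      calc dist ((g ^ m) x₀) ((g ^ m') x₀) ≤ (|m - m'| : ℝ) * c := hdist m m'
        _ ≤ (|m - m'| : ℝ) * A := mul_le_mul_of_nonneg_left hcA (by positivity)
        _ = A * (|m - m'| : ℤ) := by push_cast; ring
  · intro m
    rw [div_le_iff₀ hL]
    have := hlow 0 m
    have h0 : (g ^ (0 : ℤ)) x₀ = x₀ := by simp
    rw [h0] at this
    simp only [Int.cast_zero, zero_sub, abs_neg] at this
    push_cast
    linarith
end

section
/- The Farey graph is connected: for any two reduced fractions p/q and r/s (with q, s > 0 and gcd(p,q) = gcd(r,s) = 1, and allowing the vertex infinity = 1/0), there is a finite path of vertices starting at p/q and ending at r/s such that consecutive vertices a/b and c/d satisfy |ad - bc| = 1. -/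
private theorem farey_aux : ∀ (n : ℕ) (p q : ℤ), q.toNat = n → 0 < q → IsCoprime p q →
    ∃ L : List (ℤ × ℤ), L ≠ [] ∧ L.head? = some (p, q) ∧ L.getLast? = some (1, 0) ∧
      (∀ v ∈ L, IsCoprime v.1 v.2 ∧ 0 ≤ v.2) ∧
      List.Chain' (fun x y => |x.1 * y.2 - x.2 * y.1| = 1) L := by
  intro n
  induction n using Nat.strong_induction_on with
  | _ n ih =>
    intro p q hn hq hpq
    rcases eq_or_lt_of_le (show (1:ℤ) ≤ q by omega) with hq1 | hq1
    · -- q = 1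
      refine ⟨[(p, 1), (1, 0)], by simp, by simp [← hq1], by simp [← hq1], ?_, ?_⟩
      · intro v hv
        simp only [List.mem_cons, List.mem_singleton] at hv
        rcases hv with h | h | h
        · subst h; exact ⟨isCoprime_one_right, by norm_num⟩
        · subst h; exact ⟨isCoprime_one_left, le_refl 0⟩
        · simp at h
      · refine List.isChain_cons_cons.mpr ⟨?_, List.isChain_singleton _⟩
        simp
    · -- q > 1
      obtain ⟨a, b, hab⟩ := hpq
      set b' : ℤ := a % q with hb'
      set a' : ℤ := -b - p * (a / q) with ha'
      have hb'def : b' = a - q * (a / q) := Int.emod_def a q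
      have key : p * b' - q * a' = 1 := by
        have h : p * b' - q * a' = a * p + b * q := by rw [hb'def, ha']; ring
        rw [h, hab]
      have hb'nonneg : 0 ≤ b' := Int.emod_nonneg a hq.ne'
      have hb'lt : b' < q := Int.emod_lt_of_pos a hq
      have hb'pos : 0 < b' := by
        rcases eq_or_lt_of_le hb'nonneg with h | h
        · exfalso
          have hdvd : q ∣ 1 := ⟨-a', by rw [← key, ← h]; ring⟩
          have := Int.le_of_dvd one_pos hdvd
          linarith
        · exact h
      have hcop : IsCoprime a' b' := ⟨-q, p, by linarith [key]⟩
      have hlt : b'.toNat < n := by omega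
      obtain ⟨L', hne', hh', hl', hv', hc'⟩ := ih b'.toNat hlt a' b' rfl hb'pos hcop
      obtain ⟨v, t, rfl⟩ := List.exists_cons_of_ne_nil hne'
      have hv : v = (a', b') := by simpa using hh'
      subst hv
      refine ⟨(p, q) :: (a', b') :: t, by simp, by simp, ?_, ?_, ?_⟩
      · rw [List.getLast?_cons_cons]; exact hl'
      · intro w hw
        rcases List.mem_cons.mp hw with h | h
        · subst h; exact ⟨⟨a, b, by simpa using hab⟩, hq.le⟩
        · exact hv' w h
      · refine List.isChain_cons_cons.mpr ⟨?_, hc'⟩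
        simp only [key, abs_one]

/-- The Farey graph is connected: for any two reduced fractions `p/q` and `r/s`
(with `q, s > 0`, allowing the vertex `∞ = 1/0` along the way), there is a
finite path of reduced fractions from `p/q` to `r/s` in which consecutive
vertices `a/b`, `c/d` satisfy `|a·d - b·c| = 1`. -/
theorem stmt_10 (p q r s : ℤ) (hq : 0 < q) (hs : 0 < s)
    (hpq : IsCoprime p q) (hrs : IsCoprime r s) :
    ∃ L : List (ℤ × ℤ), L ≠ [] ∧
      L.head? = some (p, q) ∧ L.getLast? = some (r, s) ∧
      (∀ v ∈ L, IsCoprime v.1 v.2 ∧ 0 ≤ v.2) ∧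
      List.Chain' (fun x y => |x.1 * y.2 - x.2 * y.1| = 1) L := by
  obtain ⟨L1, h1ne, h1h, h1l, h1v, h1c⟩ := farey_aux q.toNat p q rfl hq hpq
  obtain ⟨L2, h2ne, h2h, h2l, h2v, h2c⟩ := farey_aux s.toNat r s rfl hs hrs
  -- L2 has length ≥ 2
  obtain ⟨x, t2, rfl⟩ := List.exists_cons_of_ne_nil h2ne
  have hx : x = (r, s) := by simpa using h2h
  subst hx
  have ht2ne : t2 ≠ [] := by
    rintro rfl
    simp at h2l
    omega
  -- reversed second path
  have hMc : List.Chain' (fun x y : ℤ × ℤ => |x.1 * y.2 - x.2 * y.1| = 1)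
      (((r, s) :: t2).reverse) := by
    apply List.isChain_reverse.mpr
    refine h2c.imp ?_
    intro u v h
    show |v.1 * u.2 - v.2 * u.1| = 1
    have : v.1 * u.2 - v.2 * u.1 = -(u.1 * v.2 - u.2 * v.1) := by ring
    rw [this, abs_neg]; exact h
  have hMne : ((r, s) :: t2).reverse ≠ [] := by simp
  have hMh : ((r, s) :: t2).reverse.head? = some (1, 0) := by
    rw [List.head?_reverse]; exact h2l
  obtain ⟨z, M', hM⟩ := List.exists_cons_of_ne_nil hMne
  rw [hM] at hMh hMc
  have hz : z = (1, 0) := by simpa using hMh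
  subst hz
  have hM'ne : M' ≠ [] := by
    rintro rfl
    have : ((r, s) :: t2).length = 1 := by
      rw [← List.length_reverse, hM]; simp
    simp at this
    exact ht2ne this
  obtain ⟨w, M'', rfl⟩ := List.exists_cons_of_ne_nil hM'ne
  have hedge : |(1 : ℤ) * w.2 - 0 * w.1| = 1 := (List.isChain_cons_cons.mp hMc).1
  refine ⟨L1 ++ w :: M'', ?_, ?_, ?_, ?_, ?_⟩
  · simp [h1ne]
  · rw [List.head?_append_of_ne_nil _ h1ne]
    exact h1h
  · rw [List.getLast?_append_of_ne_nil _ (by simp : w :: M'' ≠ [])]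
    have : ((1, 0) :: w :: M'').getLast? = some (r, s) := by
      rw [← hM, List.getLast?_reverse]; simp
    rwa [List.getLast?_cons_cons] at this
  · intro v hv
    rcases List.mem_append.mp hv with h | h
    · exact h1v v h
    · have : v ∈ (1, 0) :: w :: M'' := List.mem_cons_of_mem _ h
      rw [← hM, List.mem_reverse] at this
      exact h2v v this
  · refine List.IsChain.append h1c (List.isChain_cons_cons.mp hMc).2 ?_
    intro x hx y hy
    have hx' : x = (1, 0) := by rw [h1l] at hx; exact (by simpa using hx : (1,0) = x).symm
    have hy' : y = w := by exact (by simpa using hy : w = y).symm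
    subst hx'; subst hy'
    simpa using hedge
end
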